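/- arXiv:2512.11504 — 2 statements merged into one kernel-verified Lean document; each statement's English description precedes it below -/
import Mathlib

section
/- Let H be a graph with a non-loop edge e, and let G be a two-terminal graph. Let H(G)_e be the graph obtained from H by deleting e and gluing in a copy of G, identifying the source and sink of G with the endpoints of e. Then R(H(G)_e; p) = S(G;p)·R(H∖e;p) + R(G;p)·R(H/e;p) as polynomials in p. -/
open scoped Classical

/-- A (multi)graph: a vertex type, a finite edge type, and an endpoint map
sending each edge to an unordered pair of vertices. -/
structure Multigraph where
  V : Type
  E : Type
  [fintE : Fintype E]
  ends : E → Sym2 V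

attribute [instance] Multigraph.fintE

namespace Multigraph

/-- The simple graph on the vertices of `G` induced by a set `A` of edges:
two distinct vertices are adjacent if some edge of `A` joins them. -/
def graphOf (G : Multigraph) (A : Finset G.E) : SimpleGraph G.V where
  Adj u v := u ≠ v ∧ ∃ e ∈ A, G.ends e = s(u, v)
  symm := by
    constructor
    rintro u v ⟨h, e, he, hev⟩
    exact ⟨h.symm, e, he, by rw [hev, Sym2.eq_swap]⟩
  loopless := by constructor; rintro v ⟨h, -⟩; exact h rfl

/-- The (all-terminal) reliability polynomial of `G`, evaluated at the edge
failure probability `p`. -/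
noncomputable def rel (G : Multigraph) (p : ℂ) : ℂ :=
  ∑ A : Finset G.E,
    if (G.graphOf A).Connected then (1 - p) ^ A.card * p ^ (Fintype.card G.E - A.card) else 0

end Multigraph

/-- A two-terminal graph: a multigraph together with two distinct distinguished
vertices, the source `s` and the sink `t`. -/
structure TTGraph extends Multigraph where
  s : V
  t : V
  hst : s ≠ t

namespace TTGraph

/-- The reliability polynomial of a two-terminal graph. -/
noncomputable def rel (G : TTGraph) (p : ℂ) : ℂ := G.toMultigraph.rel p

/-- `A` is an `s`–`t` split: every vertex is joined by a path (within `A`) to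
exactly one of `s`, `t`. -/
def IsSplit (G : TTGraph) (A : Finset G.toMultigraph.E) : Prop :=
  ∀ v : G.V, Xor' ((G.toMultigraph.graphOf A).Reachable v G.s)
    ((G.toMultigraph.graphOf A).Reachable v G.t)

/-- The split reliability polynomial of a two-terminal graph. -/
noncomputable def split (G : TTGraph) (p : ℂ) : ℂ :=
  ∑ A : Finset G.toMultigraph.E,
    if G.IsSplit A then (1 - p) ^ A.card * p ^ (Fintype.card G.toMultigraph.E - A.card) else 0

/-- The effective edge interaction `y_G(p)`. -/
noncomputable def yEff (G : TTGraph) (p : ℂ) : ℂ := (1 - p) * G.split p / G.rel p + 1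

/-- The virtual edge interaction `ŷ_G(p)`. -/
noncomputable def yVirt (G : TTGraph) (p : ℂ) : ℂ := G.rel p / G.split p + 1

/-- The identifications made in the parallel composition: the two sources are
identified and the two sinks are identified. -/
def parRel (G₁ G₂ : TTGraph) : (G₁.V ⊕ G₂.V) → (G₁.V ⊕ G₂.V) → Prop :=
  fun a b => (a = .inl G₁.s ∧ b = .inr G₂.s) ∨ (a = .inl G₁.t ∧ b = .inr G₂.t)

/-- The parallel composition `G₁ ∥ G₂` of two two-terminal graphs. -/
noncomputable def par (G₁ G₂ : TTGraph) : TTGraph where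
  V := Quot (parRel G₁ G₂)
  E := G₁.toMultigraph.E ⊕ G₂.toMultigraph.E
  ends := Sum.elim (fun e => (G₁.ends e).map (Quot.mk _ ∘ Sum.inl))
    (fun e => (G₂.ends e).map (Quot.mk _ ∘ Sum.inr))
  s := Quot.mk _ (.inl G₁.s)
  t := Quot.mk _ (.inl G₁.t)
  hst := by
    intro h
    have hresp : ∀ a b, parRel G₁ G₂ a b →
        (Sum.elim (fun v => v = G₁.t) (fun v => v = G₂.t) a : Prop) =
        (Sum.elim (fun v => v = G₁.t) (fun v => v = G₂.t) b : Prop) := by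
      rintro a b (⟨rfl, rfl⟩ | ⟨rfl, rfl⟩) <;> simp [G₁.hst, G₂.hst]
    have := congrArg (Quot.lift _ hresp) h
    simp [G₁.hst] at this

/-- The identification made in the series composition: the sink of `G₁` is
identified with the source of `G₂`. -/
def serRel (G₁ G₂ : TTGraph) : (G₁.V ⊕ G₂.V) → (G₁.V ⊕ G₂.V) → Prop :=
  fun a b => a = .inl G₁.t ∧ b = .inr G₂.s

/-- The series composition `G₁ ⋈ G₂` of two two-terminal graphs. -/
noncomputable def ser (G₁ G₂ : TTGraph) : TTGraph where
  V := Quot (serRel G₁ G₂)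
  E := G₁.toMultigraph.E ⊕ G₂.toMultigraph.E
  ends := Sum.elim (fun e => (G₁.ends e).map (Quot.mk _ ∘ Sum.inl))
    (fun e => (G₂.ends e).map (Quot.mk _ ∘ Sum.inr))
  s := Quot.mk _ (.inl G₁.s)
  t := Quot.mk _ (.inr G₂.t)
  hst := by
    intro h
    have hresp : ∀ a b, serRel G₁ G₂ a b →
        (Sum.elim (fun v => v = G₁.t) (fun _ => True) a : Prop) =
        (Sum.elim (fun v => v = G₁.t) (fun _ => True) b : Prop) := by
      rintro a b ⟨rfl, rfl⟩; simp
    have := congrArg (Quot.lift _ hresp) h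
    simp [G₁.hst] at this

end TTGraph

namespace Multigraph

/-- Deletion of an edge. -/
noncomputable def delete (G : Multigraph) (e : G.E) : Multigraph where
  V := G.V
  E := {e' : G.E // e' ≠ e}
  ends := fun e' => G.ends e'.1

/-- Contraction of an edge: its two endpoints are identified, and the edge is removed. -/
noncomputable def contract (G : Multigraph) (e : G.E) : Multigraph where
  V := Quot (fun a b => G.ends e = s(a, b))
  E := {e' : G.E // e' ≠ e}
  ends := fun e' => (G.ends e'.1).map (Quot.mk _)

end Multigraph

/-- The identifications for gluing a two-terminal graph `G` in place of an edge with
endpoints `u`, `v`: the source of `G` is identified with `u`, the sink with `v`. -/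
def substRel (H : Multigraph) (u v : H.V) (G : TTGraph) :
    (H.V ⊕ G.V) → (H.V ⊕ G.V) → Prop :=
  fun a b => (a = .inl u ∧ b = .inr G.s) ∨ (a = .inl v ∧ b = .inr G.t)

/-- The graph `H(G)_e` obtained from `H` by deleting the edge `e` (with endpoints
`u`, `v`) and gluing in a copy of `G`, identifying the source of `G` with `u`
and the sink of `G` with `v`. -/
noncomputable def Multigraph.substEdge (H : Multigraph) (e : H.E) (u v : H.V) (G : TTGraph) :
    Multigraph where
  V := Quot (substRel H u v G)
  E := {e' : H.E // e' ≠ e} ⊕ G.toMultigraph.E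
  ends := Sum.elim (fun e' => (H.ends e'.1).map (Quot.mk _ ∘ Sum.inl))
    (fun f => (G.ends f).map (Quot.mk _ ∘ Sum.inr))

namespace RelSubst

/-- Packaged context for the substitution theorem. -/
structure Ctx where
  H : Multigraph
  e : H.E
  u : H.V
  v : H.V
  G : TTGraph
  huv : u ≠ v
  hends : H.ends e = s(u, v)
  A₁ : Finset (H.delete e).E
  A₂ : Finset G.toMultigraph.E

namespace Ctx

variable (c : Ctx)

abbrev X := c.H.V ⊕ c.G.V

def q : c.X → (c.H.substEdge c.e c.u c.v c.G).V := Quot.mk _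

theorem q_gate_s : c.q (.inl c.u) = c.q (.inr c.G.s) :=
  Quot.sound (show substRel c.H c.u c.v c.G _ _ from Or.inl ⟨rfl, rfl⟩)

theorem q_gate_t : c.q (.inl c.v) = c.q (.inr c.G.t) :=
  Quot.sound (show substRel c.H c.u c.v c.G _ _ from Or.inr ⟨rfl, rfl⟩)

theorem q_eq_iff {x y : c.X} :
    c.q x = c.q y ↔ x = y ∨ (x = .inl c.u ∧ y = .inr c.G.s) ∨ (y = .inl c.u ∧ x = .inr c.G.s)
      ∨ (x = .inl c.v ∧ y = .inr c.G.t) ∨ (y = .inl c.v ∧ x = .inr c.G.t) := by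
  constructor
  · intro h
    have h' := Quot.eqvGen_exact h
    clear h
    induction h' with
    | rel a b hab => rcases hab with ⟨rfl, rfl⟩ | ⟨rfl, rfl⟩ <;> tauto
    | refl => tauto
    | symm a b _ ih => tauto
    | trans a b c' _ _ ih1 ih2 =>
      have huv := c.huv
      have hst := c.G.hst
      rcases ih1 with rfl | ⟨rfl, rfl⟩ | ⟨rfl, rfl⟩ | ⟨rfl, rfl⟩ | ⟨rfl, rfl⟩ <;>
        rcases ih2 with rfl | ⟨h1, h2⟩ | ⟨h1, h2⟩ | ⟨h1, h2⟩ | ⟨h1, h2⟩ <;>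
        simp_all <;> tauto
  · rintro (rfl | ⟨rfl, rfl⟩ | ⟨rfl, rfl⟩ | ⟨rfl, rfl⟩ | ⟨rfl, rfl⟩)
    · rfl
    · exact c.q_gate_s
    · exact c.q_gate_s.symm
    · exact c.q_gate_t
    · exact c.q_gate_t.symm

def qc : c.H.V → (c.H.contract c.e).V := Quot.mk _

theorem qc_uv : c.qc c.u = c.qc c.v :=
  Quot.sound (show c.H.ends c.e = s(c.u, c.v) from c.hends)

theorem qc_eq_iff {a b : c.H.V} :
    c.qc a = c.qc b ↔ a = b ∨ ((a = c.u ∨ a = c.v) ∧ (b = c.u ∨ b = c.v)) := by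
  constructor
  · intro h
    have h' := Quot.eqvGen_exact h
    clear h
    induction h' with
    | rel a b hab =>
      rw [c.hends, Sym2.eq_iff] at hab
      tauto
    | refl => tauto
    | symm a b _ ih => tauto
    | trans a b c' _ _ ih1 ih2 =>
      rcases ih1 with rfl | ⟨h1, h2⟩ <;> rcases ih2 with rfl | ⟨h3, h4⟩ <;> tauto
  · rintro (rfl | ⟨rfl | rfl, rfl | rfl⟩)
    · rfl
    · rfl
    · exact c.qc_uv
    · exact c.qc_uv.symm
    · rfl

end Ctx
end RelSubst
namespace RelSubst
namespace Ctx

variable (c : Ctx)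

/-- The deleted graph `H∖e` restricted to `A₁`. -/
noncomputable def GD : SimpleGraph c.H.V := (c.H.delete c.e).graphOf c.A₁

/-- The contracted graph `H/e` restricted to `A₁`. -/
noncomputable def GC : SimpleGraph (c.H.contract c.e).V := (c.H.contract c.e).graphOf c.A₁

/-- The graph `G` restricted to `A₂`. -/
def GG : SimpleGraph c.G.V := c.G.toMultigraph.graphOf c.A₂

/-- The glued graph restricted to `A₁ ⊔ A₂`. -/
noncomputable def GK : SimpleGraph (c.H.substEdge c.e c.u c.v c.G).V :=
  (c.H.substEdge c.e c.u c.v c.G).graphOf (c.A₁.disjSum c.A₂)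

/-- Reaching the first gate. -/
def R₁ : c.X → Prop := Sum.elim (fun a => c.GD.Reachable a c.u) (fun d => c.GG.Reachable d c.G.s)

/-- Reaching the second gate. -/
def R₂ : c.X → Prop := Sum.elim (fun a => c.GD.Reachable a c.v) (fun d => c.GG.Reachable d c.G.t)

/-- Reachability staying on one side. -/
def Rho0 : c.X → c.X → Prop := fun x y =>
  match x, y with
  | .inl a, .inl b => c.GD.Reachable a b
  | .inr a, .inr b => c.GG.Reachable a b
  | _, _ => False

/-- The two gates are linked. -/
def Gam : Prop := c.GG.Reachable c.G.s c.G.t ∨ c.GD.Reachable c.u c.v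

/-- Explicit description of reachability in the glued graph. -/
def Rho (x y : c.X) : Prop :=
  c.Rho0 x y ∨ (c.R₁ x ∧ c.R₁ y) ∨ (c.R₂ x ∧ c.R₂ y) ∨
    (c.Gam ∧ (c.R₁ x ∨ c.R₂ x) ∧ (c.R₁ y ∨ c.R₂ y))

theorem rho0_refl (x : c.X) : c.Rho0 x x := by cases x <;> exact .refl _

theorem rho0_symm {x y : c.X} (h : c.Rho0 x y) : c.Rho0 y x := by
  cases x <;> cases y <;> simp only [Rho0] at * <;> first | exact h.symm | exact h

theorem rho0_trans {x y z : c.X} (h : c.Rho0 x y) (h' : c.Rho0 y z) : c.Rho0 x z := by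
  cases x <;> cases y <;> cases z <;> simp only [Rho0] at * <;>
    first | exact h.trans h' | exact h | exact h'

theorem rho0_r₁ {x y : c.X} (h : c.Rho0 x y) (h' : c.R₁ x) : c.R₁ y := by
  cases x <;> cases y <;> simp only [Rho0, R₁, Sum.elim_inl, Sum.elim_inr] at * <;>
    first | exact h.symm.trans h' | exact h'

theorem rho0_r₂ {x y : c.X} (h : c.Rho0 x y) (h' : c.R₂ x) : c.R₂ y := by
  cases x <;> cases y <;> simp only [Rho0, R₂, Sum.elim_inl, Sum.elim_inr] at * <;>
    first | exact h.symm.trans h' | exact h'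

theorem gam_of_r₁_r₂ {x : c.X} (h1 : c.R₁ x) (h2 : c.R₂ x) : c.Gam := by
  cases x
  · exact Or.inr (h1.symm.trans h2)
  · exact Or.inl (h1.symm.trans h2)

theorem rho_refl (x : c.X) : c.Rho x x := Or.inl (c.rho0_refl x)

theorem rho_symm {x y : c.X} (h : c.Rho x y) : c.Rho y x := by
  rcases h with h | h | h | ⟨hg, h1, h2⟩
  · exact Or.inl (c.rho0_symm h)
  · exact Or.inr (Or.inl h.symm)
  · exact Or.inr (Or.inr (Or.inl h.symm))
  · exact Or.inr (Or.inr (Or.inr ⟨hg, h2, h1⟩))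

theorem rho_trans {x y z : c.X} (h : c.Rho x y) (h' : c.Rho y z) : c.Rho x z := by
  rcases h with h | ⟨h1, h2⟩ | ⟨h1, h2⟩ | ⟨hg, h1, h2⟩
  · rcases h' with h' | ⟨h3, h4⟩ | ⟨h3, h4⟩ | ⟨hg, h3, h4⟩
    · exact Or.inl (c.rho0_trans h h')
    · exact Or.inr (Or.inl ⟨c.rho0_r₁ (c.rho0_symm h) h3, h4⟩)
    · exact Or.inr (Or.inr (Or.inl ⟨c.rho0_r₂ (c.rho0_symm h) h3, h4⟩))
    · refine Or.inr (Or.inr (Or.inr ⟨hg, ?_, h4⟩))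
      rcases h3 with h3 | h3
      · exact Or.inl (c.rho0_r₁ (c.rho0_symm h) h3)
      · exact Or.inr (c.rho0_r₂ (c.rho0_symm h) h3)
  · rcases h' with h' | ⟨h3, h4⟩ | ⟨h3, h4⟩ | ⟨hg, h3, h4⟩
    · exact Or.inr (Or.inl ⟨h1, c.rho0_r₁ h' h2⟩)
    · exact Or.inr (Or.inl ⟨h1, h4⟩)
    · exact Or.inr (Or.inr (Or.inr ⟨c.gam_of_r₁_r₂ h2 h3, Or.inl h1, Or.inr h4⟩))
    · exact Or.inr (Or.inr (Or.inr ⟨hg, Or.inl h1, h4⟩))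
  · rcases h' with h' | ⟨h3, h4⟩ | ⟨h3, h4⟩ | ⟨hg, h3, h4⟩
    · exact Or.inr (Or.inr (Or.inl ⟨h1, c.rho0_r₂ h' h2⟩))
    · exact Or.inr (Or.inr (Or.inr ⟨c.gam_of_r₁_r₂ h3 h2, Or.inr h1, Or.inl h4⟩))
    · exact Or.inr (Or.inr (Or.inl ⟨h1, h4⟩))
    · exact Or.inr (Or.inr (Or.inr ⟨hg, Or.inr h1, h4⟩))
  · rcases h' with h' | ⟨h3, h4⟩ | ⟨h3, h4⟩ | ⟨hg, h3, h4⟩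
    · refine Or.inr (Or.inr (Or.inr ⟨hg, h1, ?_⟩))
      rcases h2 with h2 | h2
      · exact Or.inl (c.rho0_r₁ h' h2)
      · exact Or.inr (c.rho0_r₂ h' h2)
    · exact Or.inr (Or.inr (Or.inr ⟨hg, h1, Or.inl h4⟩))
    · exact Or.inr (Or.inr (Or.inr ⟨hg, h1, Or.inr h4⟩))
    · exact Or.inr (Or.inr (Or.inr ⟨hg, h1, h4⟩))

/-- Representatives of equal points in the quotient are `Rho`-related. -/
theorem rho_of_q_eq {x y : c.X} (h : c.q x = c.q y) : c.Rho x y := by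
  rcases (c.q_eq_iff.1 h) with rfl | ⟨rfl, rfl⟩ | ⟨rfl, rfl⟩ | ⟨rfl, rfl⟩ | ⟨rfl, rfl⟩
  · exact c.rho_refl x
  · exact Or.inr (Or.inl ⟨SimpleGraph.Reachable.refl _, SimpleGraph.Reachable.refl _⟩)
  · exact Or.inr (Or.inl ⟨SimpleGraph.Reachable.refl _, SimpleGraph.Reachable.refl _⟩)
  · exact Or.inr (Or.inr (Or.inl ⟨SimpleGraph.Reachable.refl _, SimpleGraph.Reachable.refl _⟩))
  · exact Or.inr (Or.inr (Or.inl ⟨SimpleGraph.Reachable.refl _, SimpleGraph.Reachable.refl _⟩))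

end Ctx
end RelSubst
namespace RelSubst

/-- Induction along reachability. -/
theorem reach_ind {V : Type*} (Γ : SimpleGraph V) (P : V → Prop)
    (hadj : ∀ x y, Γ.Adj x y → P x → P y) {x y : V} (hx : P x) (h : Γ.Reachable x y) : P y := by
  obtain ⟨w⟩ := h
  induction w with
  | nil => exact hx
  | cons h w ih => exact ih (hadj _ _ h hx)

namespace Ctx

variable (c : Ctx)

theorem ends_inl (e₁ : (c.H.delete c.e).E) :
    (c.H.substEdge c.e c.u c.v c.G).ends (Sum.inl e₁) =
      (c.H.ends e₁.1).map (fun a => c.q (.inl a)) := rfl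

theorem ends_inr (f : c.G.toMultigraph.E) :
    (c.H.substEdge c.e c.u c.v c.G).ends (Sum.inr f) =
      (c.G.ends f).map (fun d => c.q (.inr d)) := rfl

theorem q_inl_inj {a b : c.H.V} (h : c.q (.inl a) = c.q (.inl b)) : a = b := by
  rcases c.q_eq_iff.1 h with h | ⟨h1, h2⟩ | ⟨h1, h2⟩ | ⟨h1, h2⟩ | ⟨h1, h2⟩ <;> simp_all

theorem q_inr_inj {a b : c.G.V} (h : c.q (.inr a) = c.q (.inr b)) : a = b := by
  rcases c.q_eq_iff.1 h with h | ⟨h1, h2⟩ | ⟨h1, h2⟩ | ⟨h1, h2⟩ | ⟨h1, h2⟩ <;> simp_all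

/-- Walks in `H∖e` map to walks in the glued graph. -/
theorem reachD {a b : c.H.V} (h : c.GD.Reachable a b) :
    c.GK.Reachable (c.q (.inl a)) (c.q (.inl b)) := by
  refine SimpleGraph.Reachable.map ⟨fun a => c.q (.inl a), ?_⟩ h
  rintro a b ⟨hne, e₁, he₁, hab⟩
  refine ⟨fun h => hne (c.q_inl_inj h), Sum.inl e₁, Finset.inl_mem_disjSum.2 he₁, ?_⟩
  rw [c.ends_inl, show c.H.ends e₁.1 = s(a, b) from hab, Sym2.map_pair_eq]

/-- Walks in `G` map to walks in the glued graph. -/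
theorem reachG {a b : c.G.V} (h : c.GG.Reachable a b) :
    c.GK.Reachable (c.q (.inr a)) (c.q (.inr b)) := by
  refine SimpleGraph.Reachable.map ⟨fun a => c.q (.inr a), ?_⟩ h
  rintro a b ⟨hne, f, hf, hab⟩
  refine ⟨fun h => hne (c.q_inr_inj h), Sum.inr f, Finset.inr_mem_disjSum.2 hf, ?_⟩
  rw [c.ends_inr, show c.G.ends f = s(a, b) from hab, Sym2.map_pair_eq]

theorem gamReach (h : c.Gam) : c.GK.Reachable (c.q (.inl c.u)) (c.q (.inl c.v)) := by
  rcases h with h | h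
  · rw [c.q_gate_s, c.q_gate_t]
    exact c.reachG h
  · exact c.reachD h

theorem toGate1 {x : c.X} (h : c.R₁ x) : c.GK.Reachable (c.q x) (c.q (.inl c.u)) := by
  cases x with
  | inl a => exact c.reachD h
  | inr d => rw [c.q_gate_s]; exact c.reachG h

theorem toGate2 {x : c.X} (h : c.R₂ x) : c.GK.Reachable (c.q x) (c.q (.inl c.v)) := by
  cases x with
  | inl a => exact c.reachD h
  | inr d => rw [c.q_gate_t]; exact c.reachG h

theorem rho_reach (x y : c.X) (h : c.Rho x y) : c.GK.Reachable (c.q x) (c.q y) := by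
  rcases h with h | ⟨h1, h2⟩ | ⟨h1, h2⟩ | ⟨hg, h1 | h1, h2 | h2⟩
  · cases x <;> cases y <;> simp only [Rho0] at h
    · exact c.reachD h
    · exact c.reachG h
  · exact (c.toGate1 h1).trans (c.toGate1 h2).symm
  · exact (c.toGate2 h1).trans (c.toGate2 h2).symm
  · exact (c.toGate1 h1).trans (c.toGate1 h2).symm
  · exact ((c.toGate1 h1).trans (c.gamReach hg)).trans (c.toGate2 h2).symm
  · exact ((c.toGate2 h1).trans (c.gamReach hg).symm).trans (c.toGate1 h2).symm
  · exact (c.toGate2 h1).trans (c.toGate2 h2).symm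

theorem reach_rho {x y : c.X} (h : c.GK.Reachable (c.q x) (c.q y)) : c.Rho x y := by
  have key := reach_ind c.GK (fun w => ∀ z, c.q z = w → c.Rho x z) ?_
      (fun z hz => c.rho_symm (c.rho_of_q_eq hz)) h
  · exact key y rfl
  · rintro w w' ⟨hne, ed, hed, hends⟩ hP z' hz'
    cases ed with
    | inl e₁ =>
      obtain ⟨a, b, hab⟩ : ∃ a b, c.H.ends e₁.1 = s(a, b) :=
        Sym2.ind (fun a b => ⟨a, b, rfl⟩) (c.H.ends e₁.1)
      replace hends := (c.ends_inl e₁).symm.trans hends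
      rw [hab, Sym2.map_pair_eq, Sym2.eq_iff] at hends
      have hmem := Finset.inl_mem_disjSum.1 hed
      rcases hends with ⟨ha, hb⟩ | ⟨ha, hb⟩
      · have hne' : a ≠ b := fun h => hne (by rw [← ha, ← hb, h])
        have hadj : c.GD.Adj a b := ⟨hne', e₁, hmem, hab⟩
        exact c.rho_trans (c.rho_trans (hP (.inl a) ha)
            (Or.inl (show c.Rho0 (.inl a) (.inl b) from hadj.reachable)))
          (c.rho_of_q_eq (hb.trans hz'.symm))
      · have hne' : b ≠ a := fun h => hne (by rw [← ha, ← hb, h])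
        have hadj : c.GD.Adj b a := ⟨hne', e₁, hmem,
          show c.H.ends e₁.1 = s(b, a) by rw [hab, Sym2.eq_swap]⟩
        exact c.rho_trans (c.rho_trans (hP (.inl b) hb)
            (Or.inl (show c.Rho0 (.inl b) (.inl a) from hadj.reachable)))
          (c.rho_of_q_eq (ha.trans hz'.symm))
    | inr f =>
      obtain ⟨a, b, hab⟩ : ∃ a b, c.G.ends f = s(a, b) :=
        Sym2.ind (fun a b => ⟨a, b, rfl⟩) (c.G.ends f)
      rw [c.ends_inr, hab, Sym2.map_pair_eq, Sym2.eq_iff] at hends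
      have hmem := Finset.inr_mem_disjSum.1 hed
      rcases hends with ⟨ha, hb⟩ | ⟨ha, hb⟩
      · have hne' : a ≠ b := fun h => hne (by rw [← ha, ← hb, h])
        have hadj : c.GG.Adj a b := ⟨hne', f, hmem, hab⟩
        exact c.rho_trans (c.rho_trans (hP (.inr a) ha)
            (Or.inl (show c.Rho0 (.inr a) (.inr b) from hadj.reachable)))
          (c.rho_of_q_eq (hb.trans hz'.symm))
      · have hne' : b ≠ a := fun h => hne (by rw [← ha, ← hb, h])
        have hadj : c.GG.Adj b a := ⟨hne', f, hmem,
          show c.G.ends f = s(b, a) by rw [hab, Sym2.eq_swap]⟩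
        exact c.rho_trans (c.rho_trans (hP (.inr b) hb)
            (Or.inl (show c.Rho0 (.inr b) (.inr a) from hadj.reachable)))
          (c.rho_of_q_eq (ha.trans hz'.symm))

theorem gk_connected_iff : c.GK.Connected ↔ ∀ x y : c.X, c.Rho x y := by
  constructor
  · intro h x y
    exact c.reach_rho (h.preconnected _ _)
  · intro h
    haveI : Nonempty (c.H.substEdge c.e c.u c.v c.G).V := ⟨c.q (.inl c.u)⟩
    refine ⟨fun w w' => ?_⟩
    obtain ⟨x, rfl⟩ := Quot.exists_rep w
    obtain ⟨y, rfl⟩ := Quot.exists_rep w'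
    exact c.rho_reach x y (h x y)

end Ctx
end RelSubst
namespace RelSubst
namespace Ctx

variable (c : Ctx)

/-- Explicit description of reachability in the contraction. -/
def Sig (a b : c.H.V) : Prop :=
  c.GD.Reachable a b ∨ ((c.GD.Reachable a c.u ∨ c.GD.Reachable a c.v) ∧
    (c.GD.Reachable b c.u ∨ c.GD.Reachable b c.v))

theorem sig_refl (a : c.H.V) : c.Sig a a := Or.inl (.refl _)

theorem sig_symm {a b : c.H.V} (h : c.Sig a b) : c.Sig b a := by
  rcases h with h | ⟨h1, h2⟩
  · exact Or.inl h.symm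
  · exact Or.inr ⟨h2, h1⟩

theorem sig_trans {a b d : c.H.V} (h : c.Sig a b) (h' : c.Sig b d) : c.Sig a d := by
  rcases h with h | ⟨h1, h2⟩ <;> rcases h' with h' | ⟨h3, h4⟩
  · exact Or.inl (h.trans h')
  · exact Or.inr ⟨h3.imp h.trans h.trans, h4⟩
  · exact Or.inr ⟨h1, h2.imp h'.symm.trans h'.symm.trans⟩
  · exact Or.inr ⟨h1, h4⟩

theorem sig_of_qc_eq {a b : c.H.V} (h : c.qc a = c.qc b) : c.Sig a b := by
  rcases c.qc_eq_iff.1 h with rfl | ⟨h1 | h1, h2 | h2⟩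
  · exact c.sig_refl a
  all_goals subst h1; subst h2
  · exact c.sig_refl _
  · exact Or.inr ⟨Or.inl (.refl _), Or.inr (.refl _)⟩
  · exact Or.inr ⟨Or.inr (.refl _), Or.inl (.refl _)⟩
  · exact c.sig_refl _

theorem contract_ends (e₁ : (c.H.delete c.e).E) :
    (c.H.contract c.e).ends e₁ = (c.H.ends e₁.1).map c.qc := rfl

/-- Walks in `H∖e` map to walks in `H/e`. -/
theorem reachC {a b : c.H.V} (h : c.GD.Reachable a b) :
    c.GC.Reachable (c.qc a) (c.qc b) := by
  refine reach_ind c.GD (fun b => c.GC.Reachable (c.qc a) (c.qc b)) ?_ (.refl _) h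
  rintro x y ⟨hne, e₁, he₁, hxy⟩ hx
  by_cases hq : c.qc x = c.qc y
  · rwa [hq] at hx
  · refine hx.trans (SimpleGraph.Adj.reachable ⟨hq, e₁, he₁, ?_⟩)
    rw [c.contract_ends, show c.H.ends e₁.1 = s(x, y) from hxy, Sym2.map_pair_eq]

theorem sig_reach {a b : c.H.V} (h : c.Sig a b) : c.GC.Reachable (c.qc a) (c.qc b) := by
  rcases h with h | ⟨h1 | h1, h2 | h2⟩
  · exact c.reachC h
  · exact (c.reachC h1).trans (c.reachC h2).symm
  · exact ((c.reachC h1).trans (c.qc_uv ▸ (SimpleGraph.Reachable.refl (c.qc c.u)))).trans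
      (c.reachC h2).symm
  · exact ((c.reachC h1).trans (c.qc_uv ▸ (SimpleGraph.Reachable.refl (c.qc c.u)))).symm.symm.trans
      (c.reachC h2).symm
  · exact (c.reachC h1).trans (c.reachC h2).symm

theorem reach_sig {a b : c.H.V} (h : c.GC.Reachable (c.qc a) (c.qc b)) : c.Sig a b := by
  have key := reach_ind c.GC (fun w => ∀ z, c.qc z = w → c.Sig a z) ?_
      (fun z hz => c.sig_symm (c.sig_of_qc_eq hz)) h
  · exact key b rfl
  · rintro w w' ⟨hne, e₁, hmem, hends⟩ hP z' hz'
    obtain ⟨a₀, b₀, hab⟩ : ∃ x y, c.H.ends e₁.1 = s(x, y) :=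
      Sym2.ind (fun x y => ⟨x, y, rfl⟩) (c.H.ends e₁.1)
    replace hends := (c.contract_ends e₁).symm.trans hends
    rw [hab, Sym2.map_pair_eq, Sym2.eq_iff] at hends
    rcases hends with ⟨ha, hb⟩ | ⟨ha, hb⟩
    · have hne' : a₀ ≠ b₀ := fun h => hne (by rw [← ha, ← hb, h])
      have hadj : c.GD.Adj a₀ b₀ := ⟨hne', e₁, hmem, hab⟩
      exact c.sig_trans (c.sig_trans (hP a₀ ha) (Or.inl hadj.reachable))
        (c.sig_of_qc_eq (hb.trans hz'.symm))
    · have hne' : b₀ ≠ a₀ := fun h => hne (by rw [← ha, ← hb, h])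
      have hadj : c.GD.Adj b₀ a₀ := ⟨hne', e₁, hmem,
        show c.H.ends e₁.1 = s(b₀, a₀) by rw [hab, Sym2.eq_swap]⟩
      exact c.sig_trans (c.sig_trans (hP b₀ hb) (Or.inl hadj.reachable))
        (c.sig_of_qc_eq (ha.trans hz'.symm))

theorem gc_connected_iff : c.GC.Connected ↔ ∀ a b : c.H.V, c.Sig a b := by
  constructor
  · intro h a b
    exact c.reach_sig (h.preconnected _ _)
  · intro h
    haveI : Nonempty (c.H.contract c.e).V := ⟨c.qc c.u⟩
    refine ⟨fun w w' => ?_⟩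
    obtain ⟨a, rfl⟩ := Quot.exists_rep w
    obtain ⟨b, rfl⟩ := Quot.exists_rep w'
    exact c.sig_reach (h a b)

end Ctx
end RelSubst
namespace RelSubst
namespace Ctx

variable (c : Ctx)

theorem connected_iff_cases :
    c.GK.Connected ↔
      (c.G.IsSplit c.A₂ ∧ c.GD.Connected) ∨ (c.GG.Connected ∧ c.GC.Connected) := by
  rw [c.gk_connected_iff]
  constructor
  · intro h
    have hr1 : ∀ a : c.H.V, c.GD.Reachable a c.u ∨ c.GD.Reachable a c.v := by
      intro a
      rcases h (.inl a) (.inr c.G.s) with h' | ⟨h1, h2⟩ | ⟨h1, h2⟩ | ⟨hg, h1, h2⟩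
      · exact h'.elim
      · exact Or.inl h1
      · exact Or.inr h1
      · exact h1
    have hr2 : ∀ d : c.G.V, c.GG.Reachable d c.G.s ∨ c.GG.Reachable d c.G.t := by
      intro d
      rcases h (.inr d) (.inl c.u) with h' | ⟨h1, h2⟩ | ⟨h1, h2⟩ | ⟨hg, h1, h2⟩
      · exact h'.elim
      · exact Or.inl h1
      · exact Or.inr h1
      · exact h1
    have hgam : c.Gam := by
      rcases h (.inr c.G.s) (.inr c.G.t) with h' | ⟨h1, h2⟩ | ⟨h1, h2⟩ | ⟨hg, h1, h2⟩
      · exact Or.inl h'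
      · exact Or.inl (h2 : c.GG.Reachable c.G.t c.G.s).symm
      · exact Or.inl (h1 : c.GG.Reachable c.G.s c.G.t)
      · exact hg
    by_cases hst : c.GG.Reachable c.G.s c.G.t
    · refine Or.inr ⟨?_, ?_⟩
      · haveI : Nonempty c.G.V := ⟨c.G.s⟩
        refine ⟨fun d d' => ?_⟩
        rcases hr2 d with h1 | h1 <;> rcases hr2 d' with h2 | h2
        · exact h1.trans h2.symm
        · exact (h1.trans hst).trans h2.symm
        · exact (h1.trans hst.symm).trans h2.symm
        · exact h1.trans h2.symm
      · exact c.gc_connected_iff.2 fun a b => Or.inr ⟨hr1 a, hr1 b⟩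
    · have huvD : c.GD.Reachable c.u c.v := hgam.resolve_left hst
      refine Or.inl ⟨?_, ?_⟩
      · intro d
        rcases hr2 d with h1 | h1
        · exact Or.inl ⟨h1, fun h2 => hst (h1.symm.trans h2)⟩
        · exact Or.inr ⟨h1, fun h2 => hst (h2.symm.trans h1)⟩
      · haveI : Nonempty c.H.V := ⟨c.u⟩
        refine ⟨fun a b => ?_⟩
        rcases hr1 a with h1 | h1 <;> rcases hr1 b with h2 | h2
        · exact h1.trans h2.symm
        · exact (h1.trans huvD).trans h2.symm
        · exact (h1.trans huvD.symm).trans h2.symm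
        · exact h1.trans h2.symm
  · rintro (⟨hsplit, hD⟩ | ⟨hG, hC⟩) <;> intro x y
    · have hg : c.Gam := Or.inr (hD.preconnected c.u c.v)
      have hx : ∀ x : c.X, c.R₁ x ∨ c.R₂ x := by
        rintro (a | d)
        · exact Or.inl (hD.preconnected a c.u)
        · rcases hsplit d with ⟨h1, h2⟩ | ⟨h1, h2⟩
          · exact Or.inl h1
          · exact Or.inr h1
      exact Or.inr (Or.inr (Or.inr ⟨hg, hx x, hx y⟩))
    · have hg : c.Gam := Or.inl (hG.preconnected c.G.s c.G.t)
      have hx : ∀ x : c.X, c.R₁ x ∨ c.R₂ x := by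
        rintro (a | d)
        · rcases c.gc_connected_iff.1 hC a c.u with h1 | ⟨h1, h2⟩
          · exact Or.inl h1
          · exact h1
        · exact Or.inl (hG.preconnected d c.G.s)
      exact Or.inr (Or.inr (Or.inr ⟨hg, hx x, hx y⟩))

theorem not_both :
    ¬((c.G.IsSplit c.A₂ ∧ c.GD.Connected) ∧ (c.GG.Connected ∧ c.GC.Connected)) := by
  rintro ⟨⟨hs, -⟩, hg, -⟩
  rcases hs c.G.s with ⟨-, hn⟩ | ⟨-, hn⟩
  · exact hn (hg.preconnected c.G.s c.G.t)
  · exact hn (SimpleGraph.Reachable.refl _)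

end Ctx
end RelSubst
namespace RelSubst
namespace Ctx

variable (c : Ctx)

theorem card_substE :
    Fintype.card (c.H.substEdge c.e c.u c.v c.G).E
      = Fintype.card (c.H.delete c.e).E + Fintype.card c.G.toMultigraph.E := by
  have e1 : (c.H.substEdge c.e c.u c.v c.G).E ≃ ((c.H.delete c.e).E ⊕ c.G.toMultigraph.E) :=
    Equiv.refl _
  rw [Fintype.card_congr e1, Fintype.card_sum]

theorem card_contractE :
    Fintype.card (c.H.contract c.e).E = Fintype.card (c.H.delete c.e).E :=
  Fintype.card_congr (Equiv.refl _)

theorem weight_factor (p : ℂ) :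
    (1 - p) ^ (c.A₁.disjSum c.A₂).card
        * p ^ (Fintype.card (c.H.substEdge c.e c.u c.v c.G).E - (c.A₁.disjSum c.A₂).card)
      = ((1 - p) ^ c.A₂.card * p ^ (Fintype.card c.G.toMultigraph.E - c.A₂.card))
        * ((1 - p) ^ c.A₁.card * p ^ (Fintype.card (c.H.delete c.e).E - c.A₁.card)) := by
  have h1 : c.A₁.card ≤ Fintype.card (c.H.delete c.e).E := Finset.card_le_univ _
  have h2 : c.A₂.card ≤ Fintype.card c.G.toMultigraph.E := Finset.card_le_univ _
  rw [Finset.card_disjSum, c.card_substE,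
    show Fintype.card (c.H.delete c.e).E + Fintype.card c.G.toMultigraph.E
        - (c.A₁.card + c.A₂.card)
      = (Fintype.card (c.H.delete c.e).E - c.A₁.card)
        + (Fintype.card c.G.toMultigraph.E - c.A₂.card) by omega,
    pow_add, pow_add]
  ring

theorem key (p : ℂ) :
    (if c.GK.Connected then
        (1 - p) ^ (c.A₁.disjSum c.A₂).card
          * p ^ (Fintype.card (c.H.substEdge c.e c.u c.v c.G).E - (c.A₁.disjSum c.A₂).card)
      else 0)
    = (if c.G.IsSplit c.A₂ then
          (1 - p) ^ c.A₂.card * p ^ (Fintype.card c.G.toMultigraph.E - c.A₂.card) else 0)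
        * (if c.GD.Connected then
          (1 - p) ^ c.A₁.card * p ^ (Fintype.card (c.H.delete c.e).E - c.A₁.card) else 0)
      + (if c.GG.Connected then
          (1 - p) ^ c.A₂.card * p ^ (Fintype.card c.G.toMultigraph.E - c.A₂.card) else 0)
        * (if c.GC.Connected then
          (1 - p) ^ c.A₁.card * p ^ (Fintype.card (c.H.contract c.e).E - c.A₁.card) else 0) := by
  have hzero : ∀ (P Q : Prop) (x y : ℂ), ¬(P ∧ Q) →
      (if P then x else 0) * (if Q then y else 0) = 0 := by
    intro P Q x y h
    by_cases hP : P
    · rw [if_neg (fun hq => h ⟨hP, hq⟩), mul_zero]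
    · rw [if_neg hP, zero_mul]
  by_cases h1 : c.G.IsSplit c.A₂ ∧ c.GD.Connected
  · rw [if_pos (c.connected_iff_cases.2 (Or.inl h1)), if_pos h1.1, if_pos h1.2,
      hzero _ _ _ _ (fun h2 => c.not_both ⟨h1, h2⟩), add_zero]
    exact c.weight_factor p
  · by_cases h2 : c.GG.Connected ∧ c.GC.Connected
    · rw [if_pos (c.connected_iff_cases.2 (Or.inr h2)), if_pos h2.1, if_pos h2.2,
        hzero _ _ _ _ h1, zero_add, c.card_contractE]
      exact c.weight_factor p
    · rw [if_neg (fun hc => ((c.connected_iff_cases.1 hc).elim h1 h2)),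
        hzero _ _ _ _ h1, hzero _ _ _ _ h2, add_zero]

end Ctx
end RelSubst
/-- Replacing a non-loop edge `e` of `H` (with endpoints `u ≠ v`) by a
copy of a two-terminal graph `G` gives
`R(H(G)_e; p) = S(G;p)·R(H∖e;p) + R(G;p)·R(H/e;p)`. -/
theorem rel_substEdge (H : Multigraph) (e : H.E) (u v : H.V) (huv : u ≠ v)
    (hends : H.ends e = s(u, v)) (G : TTGraph) (p : ℂ) :
    (H.substEdge e u v G).rel p
      = G.split p * (H.delete e).rel p + G.rel p * (H.contract e).rel p := by
  classical
  let E' : Finset (H.delete e).E × Finset G.toMultigraph.E ≃ Finset (H.substEdge e u v G).E :=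
    { toFun := fun pr => pr.1.disjSum pr.2
      invFun := fun A => (A.toLeft, A.toRight)
      left_inv := fun pr => by exact Prod.ext Finset.toLeft_disjSum Finset.toRight_disjSum
      right_inv := fun A => Finset.toLeft_disjSum_toRight }
  have h0 : (H.substEdge e u v G).rel p
      = ∑ pr : Finset (H.delete e).E × Finset G.toMultigraph.E,
          (if ((H.substEdge e u v G).graphOf (pr.1.disjSum pr.2)).Connected then
            (1 - p) ^ (pr.1.disjSum pr.2).card
              * p ^ (Fintype.card (H.substEdge e u v G).E - (pr.1.disjSum pr.2).card)
          else 0) := by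
    rw [Multigraph.rel]
    exact (Fintype.sum_equiv E' _ _ (fun pr => rfl)).symm
  rw [h0, Fintype.sum_prod_type]
  have key : ∀ (A₁ : Finset (H.delete e).E) (A₂ : Finset G.toMultigraph.E),
      (if ((H.substEdge e u v G).graphOf (A₁.disjSum A₂)).Connected then
          (1 - p) ^ (A₁.disjSum A₂).card
            * p ^ (Fintype.card (H.substEdge e u v G).E - (A₁.disjSum A₂).card)
        else 0)
      = (if G.IsSplit A₂ then
            (1 - p) ^ A₂.card * p ^ (Fintype.card G.toMultigraph.E - A₂.card) else 0)
          * (if ((H.delete e).graphOf A₁).Connected then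
            (1 - p) ^ A₁.card * p ^ (Fintype.card (H.delete e).E - A₁.card) else 0)
        + (if (G.toMultigraph.graphOf A₂).Connected then
            (1 - p) ^ A₂.card * p ^ (Fintype.card G.toMultigraph.E - A₂.card) else 0)
          * (if ((H.contract e).graphOf A₁).Connected then
            (1 - p) ^ A₁.card * p ^ (Fintype.card (H.contract e).E - A₁.card) else 0) :=
    fun A₁ A₂ => (RelSubst.Ctx.mk H e u v G huv hends A₁ A₂).key p
  calc
    ∑ A₁ : Finset (H.delete e).E, ∑ A₂ : Finset G.toMultigraph.E,
        (if ((H.substEdge e u v G).graphOf (A₁.disjSum A₂)).Connected then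
          (1 - p) ^ (A₁.disjSum A₂).card
            * p ^ (Fintype.card (H.substEdge e u v G).E - (A₁.disjSum A₂).card)
        else 0)
      = ∑ A₁ : Finset (H.delete e).E, ∑ A₂ : Finset G.toMultigraph.E,
          ((if G.IsSplit A₂ then
              (1 - p) ^ A₂.card * p ^ (Fintype.card G.toMultigraph.E - A₂.card) else 0)
            * (if ((H.delete e).graphOf A₁).Connected then
              (1 - p) ^ A₁.card * p ^ (Fintype.card (H.delete e).E - A₁.card) else 0)
          + (if (G.toMultigraph.graphOf A₂).Connected then
              (1 - p) ^ A₂.card * p ^ (Fintype.card G.toMultigraph.E - A₂.card) else 0)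
            * (if ((H.contract e).graphOf A₁).Connected then
              (1 - p) ^ A₁.card * p ^ (Fintype.card (H.contract e).E - A₁.card) else 0)) :=
      Finset.sum_congr rfl fun A₁ _ => Finset.sum_congr rfl fun A₂ _ => key A₁ A₂
    _ = ∑ A₁ : Finset (H.delete e).E,
          ((∑ A₂ : Finset G.toMultigraph.E, if G.IsSplit A₂ then
              (1 - p) ^ A₂.card * p ^ (Fintype.card G.toMultigraph.E - A₂.card) else 0)
            * (if ((H.delete e).graphOf A₁).Connected then
              (1 - p) ^ A₁.card * p ^ (Fintype.card (H.delete e).E - A₁.card) else 0)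
          + (∑ A₂ : Finset G.toMultigraph.E, if (G.toMultigraph.graphOf A₂).Connected then
              (1 - p) ^ A₂.card * p ^ (Fintype.card G.toMultigraph.E - A₂.card) else 0)
            * (if ((H.contract e).graphOf A₁).Connected then
              (1 - p) ^ A₁.card * p ^ (Fintype.card (H.contract e).E - A₁.card) else 0)) := by
      refine Finset.sum_congr rfl fun A₁ _ => ?_
      rw [Finset.sum_add_distrib, ← Finset.sum_mul, ← Finset.sum_mul]
    _ = G.split p * (H.delete e).rel p + G.rel p * (H.contract e).rel p := by
      rw [Finset.sum_add_distrib, ← Finset.mul_sum, ← Finset.mul_sum]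
      congr 1 <;>
        first
          | rfl
          | (congr 1 <;>
              first
                | rfl
                | exact Fintype.sum_equiv (Equiv.refl _) _ _ (fun A => rfl))
end

section
/- Let H and G be two-terminal graphs with G connected, and let H(G) be obtained from H by substituting a copy of G for every edge. Then R(H(G);p) = (R(G;p)+S(G;p))^{|E(H)|} · R(H; 1/ŷ_G(p)) and S(H(G);p) = (R(G;p)+S(G;p))^{|E(H)|} · S(H; 1/ŷ_G(p)), where ŷ_G(p) = R(G;p)/S(G;p) + 1. Consequently ŷ_{H(G)}(p) = ŷ_H(1/ŷ_G(p)) as rational functions. -/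
open scoped Classical

/-- The identifications for substituting a copy of `G` for every edge of `H`, with
orientation `o` of the edges of `H`: for each edge `e`, the source of the copy of `G`
on `e` is identified with `(o e).1` and the sink with `(o e).2`. -/
def substAllRel (H G : TTGraph) (o : H.toMultigraph.E → H.V × H.V) :
    (H.V ⊕ H.toMultigraph.E × G.V) → (H.V ⊕ H.toMultigraph.E × G.V) → Prop :=
  fun a b => (∃ e, a = .inl (o e).1 ∧ b = .inr (e, G.s)) ∨
    (∃ e, a = .inl (o e).2 ∧ b = .inr (e, G.t))

/-- The two-terminal graph `H(G)` obtained from `H` by substituting a copy of `G` for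
every edge of `H` (oriented according to `o`). -/
noncomputable def TTGraph.substAll (H G : TTGraph) (o : H.toMultigraph.E → H.V × H.V) :
    TTGraph where
  V := Quot (substAllRel H G o)
  E := H.toMultigraph.E × G.toMultigraph.E
  ends := fun ef => (G.ends ef.2).map (Quot.mk _ ∘ Sum.inr ∘ Prod.mk ef.1)
  s := Quot.mk _ (.inl H.s)
  t := Quot.mk _ (.inl H.t)
  hst := by
    intro h
    have hresp : ∀ a b, substAllRel H G o a b →
        (Sum.elim id (fun ew => if ew.2 = G.s then (o ew.1).1 else
          if ew.2 = G.t then (o ew.1).2 else (o ew.1).1) a : H.V) =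
        (Sum.elim id (fun ew => if ew.2 = G.s then (o ew.1).1 else
          if ew.2 = G.t then (o ew.1).2 else (o ew.1).1) b : H.V) := by
      rintro a b (⟨e, rfl, rfl⟩ | ⟨e, rfl, rfl⟩) <;>
        simp [G.hst, (G.hst.symm : G.t ≠ G.s)]
    have := congrArg (Quot.lift _ hresp) h
    simp only [Sum.elim_inl, id] at this
    exact H.hst this


open Sum

namespace SubstAux

theorem reach_map {V W : Type} {A : SimpleGraph V} {B : SimpleGraph W} (g : V → W)
    (h : ∀ u v, A.Adj u v → B.Reachable (g u) (g v)) {u v : V} (huv : A.Reachable u v) :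
    B.Reachable (g u) (g v) := by
  obtain ⟨w⟩ := huv
  induction w with
  | nil => exact SimpleGraph.Reachable.refl _
  | cons h' _ ih => exact (h _ _ h').trans ih

theorem reach_invar {V : Type} {A : SimpleGraph V} {P : V → Prop}
    (h : ∀ u v, A.Adj u v → (P u ↔ P v)) {u v : V} (huv : A.Reachable u v) : P u ↔ P v := by
  obtain ⟨w⟩ := huv
  induction w with
  | nil => exact Iff.rfl
  | cons h' _ ih => exact (h _ _ h').trans ih

/-- The edge set of `H(G)` corresponding to the family `f`. -/
noncomputable def toA (H G : TTGraph) (f : H.toMultigraph.E → Finset G.toMultigraph.E) :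
    Finset (H.toMultigraph.E × G.toMultigraph.E) :=
  Finset.univ.filter (fun pr => pr.2 ∈ f pr.1)

theorem mem_toA (H G : TTGraph) (f : H.toMultigraph.E → Finset G.toMultigraph.E) {e a} :
    (e, a) ∈ toA H G f ↔ a ∈ f e := by simp [toA]

/-- Quotient map. -/
abbrev qk (H G : TTGraph) (o : H.toMultigraph.E → H.V × H.V) :
    (H.V ⊕ H.toMultigraph.E × G.V) → (H.substAll G o).V :=
  Quot.mk (substAllRel H G o)

abbrev Gf (G : TTGraph) {H : TTGraph} (f : H.toMultigraph.E → Finset G.toMultigraph.E)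
    (e : H.toMultigraph.E) : SimpleGraph G.V := G.toMultigraph.graphOf (f e)

noncomputable abbrev KG (H G : TTGraph) (o : H.toMultigraph.E → H.V × H.V)
    (f : H.toMultigraph.E → Finset G.toMultigraph.E) : SimpleGraph (H.substAll G o).V :=
  (H.substAll G o).toMultigraph.graphOf (toA H G f)

noncomputable def Bf (G : TTGraph) {H : TTGraph}
    (f : H.toMultigraph.E → Finset G.toMultigraph.E) : Finset H.toMultigraph.E :=
  Finset.univ.filter (fun e => (Gf G f e).Connected)

theorem mem_Bf (G : TTGraph) {H : TTGraph} (f : H.toMultigraph.E → Finset G.toMultigraph.E)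
    {e} : e ∈ Bf G f ↔ (Gf G f e).Connected := by simp [Bf]

noncomputable abbrev HB (G : TTGraph) {H : TTGraph} (f : H.toMultigraph.E → Finset G.toMultigraph.E) :
    SimpleGraph H.V := H.toMultigraph.graphOf (Bf G f)

variable (H G : TTGraph) (o : H.toMultigraph.E → H.V × H.V)
  (f : H.toMultigraph.E → Finset G.toMultigraph.E)

theorem qs_eq (e : H.toMultigraph.E) :
    qk H G o (inr (e, G.s)) = qk H G o (inl (o e).1) :=
  (Quot.sound (r := substAllRel H G o) (Or.inl ⟨e, rfl, rfl⟩)).symm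

theorem qt_eq (e : H.toMultigraph.E) :
    qk H G o (inr (e, G.t)) = qk H G o (inl (o e).2) :=
  (Quot.sound (r := substAllRel H G o) (Or.inr ⟨e, rfl, rfl⟩)).symm

theorem K_adj {x y} (hxy : (KG H G o f).Adj x y) :
    ∃ e u v, (Gf G f e).Adj u v ∧ x = qk H G o (inr (e, u)) ∧ y = qk H G o (inr (e, v)) := by
  obtain ⟨hne, ⟨e, a⟩, hef, hends⟩ := hxy
  have ha : a ∈ f e := (mem_toA H G f).mp hef
  obtain ⟨u, v, huv⟩ : ∃ u v, G.ends a = s(u, v) :=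
    Sym2.ind (fun u v => ⟨u, v, rfl⟩) (G.ends a)
  have hends' : s(qk H G o (inr (e, u)), qk H G o (inr (e, v))) = s(x, y) := by
    have h0 : (H.substAll G o).ends (e, a)
        = (G.ends a).map (fun w => qk H G o (inr (e, w))) := rfl
    rw [h0, huv, Sym2.map_pair_eq] at hends
    exact hends
  rcases Sym2.eq_iff.mp hends' with ⟨h1, h2⟩ | ⟨h1, h2⟩
  · have hne' : u ≠ v := by rintro rfl; exact hne (h1 ▸ h2 ▸ rfl)
    exact ⟨e, u, v, ⟨hne', a, ha, huv⟩, h1.symm, h2.symm⟩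
  · have hne' : v ≠ u := by rintro rfl; exact hne (h1 ▸ h2 ▸ rfl)
    exact ⟨e, v, u, ⟨hne', a, ha, huv.trans (Sym2.eq_swap)⟩, h2.symm, h1.symm⟩

theorem copy_reach {e u v} (h : (Gf G f e).Reachable u v) :
    (KG H G o f).Reachable (qk H G o (inr (e, u))) (qk H G o (inr (e, v))) := by
  refine reach_map (fun w => qk H G o (inr (e, w))) ?_ h
  rintro u' v' ⟨hne, a, ha, hends⟩
  show (KG H G o f).Reachable (qk H G o (inr (e, u'))) (qk H G o (inr (e, v')))
  by_cases hq : qk H G o (inr (e, u')) = qk H G o (inr (e, v'))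
  · rw [hq]
  · refine SimpleGraph.Adj.reachable ⟨hq, (e, a), (mem_toA H G f).mpr ha, ?_⟩
    show (G.ends a).map (fun w => qk H G o (inr (e, w))) = _
    rw [hends, Sym2.map_pair_eq]

/-- Projection of the vertices of `H(G)` to `H.V`. -/
noncomputable def phi (e : H.toMultigraph.E) (u : G.V) : H.V :=
  if u = G.t then (o e).2 else if (Gf G f e).Reachable u G.s then (o e).1 else (o e).2

noncomputable def phiV : (H.V ⊕ H.toMultigraph.E × G.V) → H.V :=
  Sum.elim id (fun pr => phi H G o f pr.1 pr.2)

theorem phiV_wd : ∀ a b, substAllRel H G o a b → phiV H G o f a = phiV H G o f b := by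
  rintro a b (⟨e, rfl, rfl⟩ | ⟨e, rfl, rfl⟩)
  · show (o e).1 = phi H G o f e G.s
    rw [phi, if_neg G.hst, if_pos (SimpleGraph.Reachable.refl _)]
  · show (o e).2 = phi H G o f e G.t
    rw [phi, if_pos rfl]

noncomputable def Phi : (H.substAll G o).V → H.V :=
  Quot.lift (phiV H G o f) (phiV_wd H G o f)

theorem phi_cases (e u) : phi H G o f e u = (o e).1 ∨ phi H G o f e u = (o e).2 := by
  rw [phi]; split_ifs <;> simp

theorem split_phi_eq {e u v} (hs : G.IsSplit (f e)) (huv : (Gf G f e).Adj u v) :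
    phi H G o f e u = phi H G o f e v := by
  have hne : u ≠ v := huv.ne
  have key : ∀ w w', w = G.t → w' ≠ G.t → (Gf G f e).Adj w w' →
      phi H G o f e w = phi H G o f e w' := by
    intro w w' hw hw' hadj
    subst hw
    have hvT : (Gf G f e).Reachable w' G.t := hadj.symm.reachable
    have hvS : ¬ (Gf G f e).Reachable w' G.s := by
      rcases hs w' with ⟨_, hnt⟩ | ⟨_, hns⟩
      · exact absurd hvT hnt
      · exact hns
    rw [phi, phi, if_pos rfl, if_neg hw', if_neg hvS]
  by_cases hut : u = G.t
  · exact key u v hut (fun h => hne (hut.trans h.symm)) huv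
  · by_cases hvt : v = G.t
    · exact (key v u hvt hut huv.symm).symm
    · have hiff : (Gf G f e).Reachable u G.s ↔ (Gf G f e).Reachable v G.s :=
        ⟨fun h => huv.symm.reachable.trans h, fun h => huv.reachable.trans h⟩
      rw [phi, phi, if_neg hut, if_neg hvt]
      by_cases hr : (Gf G f e).Reachable u G.s
      · rw [if_pos hr, if_pos (hiff.mp hr)]
      · rw [if_neg hr, if_neg (hiff.not.mp hr)]

theorem phi_adj (ho : ∀ e, H.ends e = s((o e).1, (o e).2))
    (hcs : ∀ e, (Gf G f e).Connected ∨ G.IsSplit (f e)) {x y}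
    (h : (KG H G o f).Adj x y) :
    (HB G f).Reachable (Phi H G o f x) (Phi H G o f y) := by
  obtain ⟨e, u, v, huv, rfl, rfl⟩ := K_adj H G o f h
  show (HB G f).Reachable (phi H G o f e u) (phi H G o f e v)
  rcases hcs e with hc | hs
  · have hmem : e ∈ Bf G f := (mem_Bf G f).mpr hc
    have h12 : (HB G f).Reachable (o e).1 (o e).2 := by
      by_cases h' : (o e).1 = (o e).2
      · rw [h']
      · exact SimpleGraph.Adj.reachable ⟨h', e, hmem, ho e⟩
    rcases phi_cases H G o f e u with h1 | h1 <;> rcases phi_cases H G o f e v with h2 | h2 <;>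
      rw [h1, h2]
    · exact h12
    · exact h12.symm
  · rw [split_phi_eq H G o f hs huv]

theorem Phi_reach (ho : ∀ e, H.ends e = s((o e).1, (o e).2))
    (hcs : ∀ e, (Gf G f e).Connected ∨ G.IsSplit (f e)) {x y}
    (h : (KG H G o f).Reachable x y) :
    (HB G f).Reachable (Phi H G o f x) (Phi H G o f y) :=
  reach_map (Phi H G o f) (fun _ _ h' => phi_adj H G o f ho hcs h') h

theorem HB_reach_lift (ho : ∀ e, H.ends e = s((o e).1, (o e).2)) {u v : H.V}
    (h : (HB G f).Reachable u v) :
    (KG H G o f).Reachable (qk H G o (inl u)) (qk H G o (inl v)) := by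
  refine reach_map (fun w => qk H G o (inl w)) ?_ h
  rintro u' v' ⟨hne, e, he, hends⟩
  have hc : (Gf G f e).Connected := (mem_Bf G f).mp he
  have base : (KG H G o f).Reachable (qk H G o (inl (o e).1)) (qk H G o (inl (o e).2)) := by
    rw [← qs_eq, ← qt_eq]
    exact copy_reach H G o f (hc.preconnected G.s G.t)
  have h2 : s((o e).1, (o e).2) = s(u', v') := (ho e).symm.trans hends
  show (KG H G o f).Reachable (qk H G o (inl u')) (qk H G o (inl v'))
  rcases Sym2.eq_iff.mp h2 with ⟨ha, hb⟩ | ⟨ha, hb⟩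
  · rw [← ha, ← hb]; exact base
  · rw [← ha, ← hb]; exact base.symm

theorem reach_to_phi (hcs : ∀ e, (Gf G f e).Connected ∨ G.IsSplit (f e)) (e u) :
    (KG H G o f).Reachable (qk H G o (inr (e, u))) (qk H G o (inl (phi H G o f e u))) := by
  rw [phi]
  split_ifs with h1 h2
  · subst h1; rw [← qt_eq]
  · have := copy_reach H G o f (e := e) h2
    rwa [qs_eq] at this
  · have hut : (Gf G f e).Reachable u G.t := by
      rcases hcs e with hc | hs
      · exact absurd (hc.preconnected u G.s) h2
      · rcases hs u with ⟨hr, _⟩ | ⟨hr, _⟩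
        · exact absurd hr h2
        · exact hr
    have := copy_reach H G o f (e := e) hut
    rwa [qt_eq] at this

theorem self_reach (hcs : ∀ e, (Gf G f e).Connected ∨ G.IsSplit (f e)) (x) :
    (KG H G o f).Reachable (qk H G o x) (qk H G o (inl (phiV H G o f x))) := by
  rcases x with v | ⟨e, u⟩
  · exact SimpleGraph.Reachable.refl _
  · exact reach_to_phi H G o f hcs e u

theorem main_iff (ho : ∀ e, H.ends e = s((o e).1, (o e).2))
    (hcs : ∀ e, (Gf G f e).Connected ∨ G.IsSplit (f e)) (x) (v : H.V) :
    (KG H G o f).Reachable (qk H G o x) (qk H G o (inl v)) ↔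
      (HB G f).Reachable (phiV H G o f x) v := by
  constructor
  · intro h
    exact Phi_reach H G o f ho hcs h
  · intro h
    exact (self_reach H G o f hcs x).trans (HB_reach_lift H G o f ho h)

theorem neither_w {e₀} (hc : ¬(Gf G f e₀).Connected) (hs : ¬ G.IsSplit (f e₀)) :
    ∃ w, ¬(Gf G f e₀).Reachable w G.s ∧ ¬(Gf G f e₀).Reachable w G.t := by
  by_contra hw
  push_neg at hw
  have hdisj : ∀ w, (Gf G f e₀).Reachable w G.s ∨ (Gf G f e₀).Reachable w G.t :=
    fun w => or_iff_not_imp_left.mpr (hw w)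
  by_cases hst : (Gf G f e₀).Reachable G.t G.s
  · have hne : Nonempty G.V := ⟨G.s⟩
    refine hc (SimpleGraph.Connected.mk fun a b => ?_)
    have ha : (Gf G f e₀).Reachable a G.s := (hdisj a).elim id (fun h => h.trans hst)
    have hb : (Gf G f e₀).Reachable b G.s := (hdisj b).elim id (fun h => h.trans hst)
    exact ha.trans hb.symm
  · refine hs fun w => ?_
    rcases hdisj w with h | h
    · exact Or.inl ⟨h, fun h' => hst (h'.symm.trans h)⟩
    · exact Or.inr ⟨h, fun h' => hst (h.symm.trans h')⟩

theorem no_reach_neither {e₀ w} (hw1 : ¬(Gf G f e₀).Reachable w G.s)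
    (hw2 : ¬(Gf G f e₀).Reachable w G.t) (v : H.V) :
    ¬ (KG H G o f).Reachable (qk H G o (inr (e₀, w))) (qk H G o (inl v)) := by
  set ψ : (H.V ⊕ H.toMultigraph.E × G.V) → Prop :=
    Sum.elim (fun _ => False) (fun pr => pr.1 = e₀ ∧ (Gf G f e₀).Reachable pr.2 w) with hψ
  have hwd : ∀ a b, substAllRel H G o a b → ψ a = ψ b := by
    rintro a b (⟨e, rfl, rfl⟩ | ⟨e, rfl, rfl⟩)
    · simp only [hψ, Sum.elim_inl, Sum.elim_inr, eq_iff_iff, false_iff]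
      rintro ⟨rfl, hr⟩
      exact hw1 hr.symm
    · simp only [hψ, Sum.elim_inl, Sum.elim_inr, eq_iff_iff, false_iff]
      rintro ⟨rfl, hr⟩
      exact hw2 hr.symm
  have hadj : ∀ x y, (KG H G o f).Adj x y →
      (Quot.lift ψ hwd x ↔ Quot.lift ψ hwd y) := by
    intro x y h
    obtain ⟨e, u, v', huv, rfl, rfl⟩ := K_adj H G o f h
    show ψ (inr (e, u)) ↔ ψ (inr (e, v'))
    by_cases he : e = e₀
    · subst he
      simp only [hψ, Sum.elim_inr]
      exact and_congr_right fun _ =>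
        ⟨fun h' => huv.symm.reachable.trans h', fun h' => huv.reachable.trans h'⟩
    · simp [hψ, he]
  intro hreach
  have hiff := reach_invar hadj hreach
  have h1 : Quot.lift ψ hwd (qk H G o (inr (e₀, w))) := ⟨rfl, SimpleGraph.Reachable.refl w⟩
  exact (hiff.mp h1)

theorem conn_iff (ho : ∀ e, H.ends e = s((o e).1, (o e).2)) :
    ((H.substAll G o).toMultigraph.graphOf (toA H G f)).Connected ↔
      (∀ e, (Gf G f e).Connected ∨ G.IsSplit (f e)) ∧ (HB G f).Connected := by
  constructor
  · intro hK
    have hcs : ∀ e, (Gf G f e).Connected ∨ G.IsSplit (f e) := by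
      intro e
      by_contra hh
      push_neg at hh
      obtain ⟨w, hw1, hw2⟩ := neither_w H G f hh.1 hh.2
      exact no_reach_neither H G o f hw1 hw2 H.s (hK.preconnected _ _)
    have hne : Nonempty H.V := ⟨H.s⟩
    refine ⟨hcs, SimpleGraph.Connected.mk fun u v => ?_⟩
    exact (main_iff H G o f ho hcs (inl u) v).mp (hK.preconnected _ _)
  · rintro ⟨hcs, hHB⟩
    have key : ∀ x, (KG H G o f).Reachable (qk H G o x) (qk H G o (inl H.s)) :=
      fun x => (main_iff H G o f ho hcs x H.s).mpr (hHB.preconnected _ _)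
    have hne : Nonempty (H.substAll G o).V := ⟨qk H G o (inl H.s)⟩
    refine SimpleGraph.Connected.mk fun a b => ?_
    obtain ⟨x, rfl⟩ := Quot.exists_rep a
    obtain ⟨y, rfl⟩ := Quot.exists_rep b
    exact (key x).trans (key y).symm

theorem xor_congr {a b c d : Prop} (h1 : a ↔ c) (h2 : b ↔ d) : Xor' a b ↔ Xor' c d := by
  rw [h1, h2]

theorem split_iff (ho : ∀ e, H.ends e = s((o e).1, (o e).2)) :
    (H.substAll G o).IsSplit (toA H G f) ↔
      (∀ e, (Gf G f e).Connected ∨ G.IsSplit (f e)) ∧ H.IsSplit (Bf G f) := by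
  constructor
  · intro hK
    have hcs : ∀ e, (Gf G f e).Connected ∨ G.IsSplit (f e) := by
      intro e
      by_contra hh
      push_neg at hh
      obtain ⟨w, hw1, hw2⟩ := neither_w H G f hh.1 hh.2
      rcases hK (qk H G o (inr (e, w))) with ⟨h1, _⟩ | ⟨h1, _⟩
      · exact no_reach_neither H G o f hw1 hw2 H.s h1
      · exact no_reach_neither H G o f hw1 hw2 H.t h1
    refine ⟨hcs, fun v => ?_⟩
    exact (xor_congr (main_iff H G o f ho hcs (inl v) H.s)
      (main_iff H G o f ho hcs (inl v) H.t)).mp (hK (qk H G o (inl v)))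
  · rintro ⟨hcs, hHB⟩
    intro a
    obtain ⟨x, rfl⟩ := Quot.exists_rep a
    exact (xor_congr (main_iff H G o f ho hcs x H.s)
      (main_iff H G o f ho hcs x H.t)).mpr (hHB (phiV H G o f x))

theorem conn_not_split {X : Finset G.toMultigraph.E}
    (hc : (G.toMultigraph.graphOf X).Connected) : ¬ G.IsSplit X := by
  intro hs
  rcases hs G.s with ⟨_, h2⟩ | ⟨_, h2⟩
  · exact h2 (hc.preconnected G.s G.t)
  · exact h2 (SimpleGraph.Reachable.refl _)

/-- Families of subsets correspond to subsets of the product. -/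
noncomputable def fEquiv :
    (H.toMultigraph.E → Finset G.toMultigraph.E) ≃ Finset (H.toMultigraph.E × G.toMultigraph.E) where
  toFun f := toA H G f
  invFun A := fun e => Finset.univ.filter (fun a => (e, a) ∈ A)
  left_inv := by intro f; funext e; ext a; simp [toA]
  right_inv := by intro A; ext ⟨e, a⟩; simp [toA]

theorem card_toA : (toA H G f).card = ∑ e, (f e).card := by
  rw [toA, Finset.card_filter]
  rw [Fintype.sum_prod_type]
  congr 1
  funext e
  rw [← Finset.card_filter]
  congr 1
  ext a
  simp

theorem sum_card_compl :
    ∑ e, (Fintype.card G.toMultigraph.E - (f e).card)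
      = Fintype.card H.toMultigraph.E * Fintype.card G.toMultigraph.E - ∑ e, (f e).card := by
  have hle : ∀ e, (f e).card ≤ Fintype.card G.toMultigraph.E := fun e => Finset.card_le_univ _
  have key : ∑ e, (Fintype.card G.toMultigraph.E - (f e).card) + ∑ e, (f e).card
      = Fintype.card H.toMultigraph.E * Fintype.card G.toMultigraph.E := by
    rw [← Finset.sum_add_distrib]
    have : ∀ e : H.toMultigraph.E,
        Fintype.card G.toMultigraph.E - (f e).card + (f e).card
          = Fintype.card G.toMultigraph.E := fun e => Nat.sub_add_cancel (hle e)
    rw [Finset.sum_congr rfl (fun e _ => this e), Finset.sum_const, Finset.card_univ,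
      smul_eq_mul]
  omega

theorem weight_toA (p : ℂ) :
    (1 - p) ^ (toA H G f).card
        * p ^ (Fintype.card H.toMultigraph.E * Fintype.card G.toMultigraph.E - (toA H G f).card)
      = ∏ e, ((1 - p) ^ (f e).card * p ^ (Fintype.card G.toMultigraph.E - (f e).card)) := by
  rw [Finset.prod_mul_distrib, Finset.prod_pow_eq_pow_sum, Finset.prod_pow_eq_pow_sum,
    card_toA, sum_card_compl]

theorem sum_key (p : ℂ)
    (QH : Finset H.toMultigraph.E → Prop)
    (QK : Finset (H.toMultigraph.E × G.toMultigraph.E) → Prop)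
    (hQ : ∀ f : H.toMultigraph.E → Finset G.toMultigraph.E,
      QK (toA H G f) ↔ (∀ e, (Gf G f e).Connected ∨ G.IsSplit (f e)) ∧ QH (Bf G f)) :
    (∑ A : Finset (H.toMultigraph.E × G.toMultigraph.E),
        if QK A then (1 - p) ^ A.card
          * p ^ (Fintype.card H.toMultigraph.E * Fintype.card G.toMultigraph.E - A.card) else 0)
      = ∑ B : Finset H.toMultigraph.E,
          if QH B then (G.rel p) ^ B.card
            * (G.split p) ^ (Fintype.card H.toMultigraph.E - B.card) else 0 := by
  classical
  set n := Fintype.card G.toMultigraph.E with hn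
  set m := Fintype.card H.toMultigraph.E with hm
  set w : Finset G.toMultigraph.E → ℂ := fun X => (1 - p) ^ X.card * p ^ (n - X.card) with hw
  have hrel : G.rel p = ∑ X : Finset G.toMultigraph.E,
      if (G.toMultigraph.graphOf X).Connected then w X else 0 := rfl
  have hsplit : G.split p = ∑ X : Finset G.toMultigraph.E,
      if G.IsSplit X then w X else 0 := rfl
  -- step 1 : sum over families
  have step1 : (∑ A : Finset (H.toMultigraph.E × G.toMultigraph.E),
        if QK A then (1 - p) ^ A.card * p ^ (m * n - A.card) else 0)
      = ∑ f : H.toMultigraph.E → Finset G.toMultigraph.E,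
          (if QK (toA H G f) then (1:ℂ) else 0) * ∏ e, w (f e) := by
    rw [← Equiv.sum_comp (fEquiv H G)]
    refine Finset.sum_congr rfl fun f _ => ?_
    show (if QK (toA H G f) then
        (1 - p) ^ (toA H G f).card * p ^ (m * n - (toA H G f).card) else 0) = _
    rw [weight_toA H G f p]
    split_ifs <;> simp <;> rfl
  rw [step1]
  -- pointwise indicator expansion
  have point : ∀ f : H.toMultigraph.E → Finset G.toMultigraph.E,
      (if QK (toA H G f) then (1:ℂ) else 0)
        = ∑ B : Finset H.toMultigraph.E, (if QH B then (1:ℂ) else 0) *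
            ∏ e, (if e ∈ B then (if (Gf G f e).Connected then (1:ℂ) else 0)
                  else (if G.IsSplit (f e) then (1:ℂ) else 0)) := by
    intro f
    by_cases hcs : ∀ e, (Gf G f e).Connected ∨ G.IsSplit (f e)
    · have hprod : ∀ B : Finset H.toMultigraph.E,
          (∏ e, (if e ∈ B then (if (Gf G f e).Connected then (1:ℂ) else 0)
                  else (if G.IsSplit (f e) then (1:ℂ) else 0)))
            = if B = Bf G f then 1 else 0 := by
        intro B
        by_cases hB : B = Bf G f
        · subst hB
          rw [if_pos rfl]
          apply Finset.prod_eq_one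
          intro e _
          by_cases he : e ∈ Bf G f
          · rw [if_pos he, if_pos ((mem_Bf G f).mp he)]
          · rw [if_neg he,
              if_pos ((hcs e).resolve_left (fun hc => he ((mem_Bf G f).mpr hc)))]
        · rw [if_neg hB]
          obtain ⟨e, hni⟩ := not_forall.mp (fun hall => hB (Finset.ext fun a => hall a))
          refine Finset.prod_eq_zero (Finset.mem_univ e) ?_
          by_cases heB : e ∈ B
          · have heBf : ¬ (Gf G f e).Connected := by
              intro hc
              exact hni ⟨fun _ => (mem_Bf G f).mpr hc, fun _ => heB⟩
            rw [if_pos heB, if_neg heBf]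
          · have heBf : e ∈ Bf G f := by
              by_contra h
              exact hni ⟨fun hh => absurd hh heB, fun hh => absurd hh h⟩
            have : ¬ G.IsSplit (f e) := conn_not_split G ((mem_Bf G f).mp heBf)
            rw [if_neg heB, if_neg this]
      have hiff : QK (toA H G f) ↔ QH (Bf G f) := (hQ f).trans (and_iff_right hcs)
      rw [if_congr hiff rfl rfl]
      rw [Finset.sum_congr rfl fun B _ => by rw [hprod B]]
      rw [Finset.sum_congr rfl fun B _ => (by rw [mul_ite, mul_one, mul_zero] :
        (if QH B then (1:ℂ) else 0) * (if B = Bf G f then 1 else 0)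
          = if B = Bf G f then (if QH B then (1:ℂ) else 0) else 0)]
      rw [Finset.sum_ite_eq' Finset.univ (Bf G f) (fun B => if QH B then (1:ℂ) else 0),
        if_pos (Finset.mem_univ _)]
    · push_neg at hcs
      obtain ⟨e₀, hc0, hs0⟩ := hcs
      have hL : ¬ QK (toA H G f) := fun h => (((hQ f).mp h).1 e₀).elim hc0 hs0
      rw [if_neg hL]
      symm
      apply Finset.sum_eq_zero
      intro B _
      have hz : (∏ e, (if e ∈ B then (if (Gf G f e).Connected then (1:ℂ) else 0)
                  else (if G.IsSplit (f e) then (1:ℂ) else 0))) = 0 := by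
        refine Finset.prod_eq_zero (Finset.mem_univ e₀) ?_
        by_cases he : e₀ ∈ B
        · rw [if_pos he, if_neg hc0]
        · rw [if_neg he, if_neg hs0]
      rw [hz, mul_zero]
  rw [Finset.sum_congr rfl fun f _ => by rw [point f, Finset.sum_mul]]
  -- swap the sums and factor
  rw [Finset.sum_comm]
  refine Finset.sum_congr rfl fun B _ => ?_
  have collect : ∀ f : H.toMultigraph.E → Finset G.toMultigraph.E,
      ((if QH B then (1:ℂ) else 0) *
          ∏ e, (if e ∈ B then (if (Gf G f e).Connected then (1:ℂ) else 0)
                else (if G.IsSplit (f e) then (1:ℂ) else 0))) * ∏ e, w (f e)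
        = (if QH B then (1:ℂ) else 0) *
            ∏ e, ((if e ∈ B then (if (Gf G f e).Connected then (1:ℂ) else 0)
                  else (if G.IsSplit (f e) then (1:ℂ) else 0)) * w (f e)) := by
    intro f
    rw [mul_assoc]
    congr 1
    exact Finset.prod_mul_distrib.symm
  rw [Finset.sum_congr rfl fun f _ => collect f, ← Finset.mul_sum]
  have inner : (∑ f : H.toMultigraph.E → Finset G.toMultigraph.E,
        ∏ e, ((if e ∈ B then (if (Gf G f e).Connected then (1:ℂ) else 0)
              else (if G.IsSplit (f e) then (1:ℂ) else 0)) * w (f e)))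
      = ∏ e, ∑ X : Finset G.toMultigraph.E,
          ((if e ∈ B then (if (G.toMultigraph.graphOf X).Connected then (1:ℂ) else 0)
            else (if G.IsSplit X then (1:ℂ) else 0)) * w X) := by
    rw [Finset.prod_univ_sum]
    rw [← Fintype.piFinset_univ]
  rw [inner]
  have innerval : ∀ e, (∑ X : Finset G.toMultigraph.E,
        ((if e ∈ B then (if (G.toMultigraph.graphOf X).Connected then (1:ℂ) else 0)
          else (if G.IsSplit X then (1:ℂ) else 0)) * w X))
      = if e ∈ B then G.rel p else G.split p := by
    intro e
    by_cases he : e ∈ B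
    · rw [if_pos he, hrel]
      refine Finset.sum_congr rfl fun X _ => ?_
      rw [if_pos he]
      split_ifs <;> simp
    · rw [if_neg he, hsplit]
      refine Finset.sum_congr rfl fun X _ => ?_
      rw [if_neg he]
      split_ifs <;> simp
  rw [Finset.prod_congr rfl fun e _ => innerval e]
  have hpow : (∏ e, if e ∈ B then G.rel p else G.split p)
      = (G.rel p) ^ B.card * (G.split p) ^ (m - B.card) := by
    rw [← Finset.prod_filter_mul_prod_filter_not Finset.univ (· ∈ B)]
    rw [Finset.filter_mem_eq_inter, Finset.univ_inter]
    have h1 : (∏ e ∈ B, if e ∈ B then G.rel p else G.split p) = (G.rel p) ^ B.card := by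
      rw [Finset.prod_congr rfl (fun e he => if_pos he), Finset.prod_const]
    have h2 : (∏ e ∈ Finset.univ.filter (fun e => ¬ e ∈ B), if e ∈ B then G.rel p else G.split p)
        = (G.split p) ^ (m - B.card) := by
      rw [Finset.prod_congr rfl (fun e he => if_neg (Finset.mem_filter.mp he).2),
        Finset.prod_const]
      congr 1
      rw [Finset.filter_not, Finset.filter_mem_eq_inter, Finset.univ_inter,
        Finset.card_sdiff_of_subset (Finset.subset_univ B), Finset.card_univ]
    rw [h1, h2]
  rw [hpow]
  rw [ite_mul, one_mul, zero_mul]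

end SubstAux

/-- Substituting a connected two-terminal graph `G` for every edge of
`H` gives `R(H(G);p) = (R(G;p)+S(G;p))^{|E(H)|} · R(H; 1/ŷ_G(p))` and
`S(H(G);p) = (R(G;p)+S(G;p))^{|E(H)|} · S(H; 1/ŷ_G(p))`; consequently
`ŷ_{H(G)}(p) = ŷ_H(1/ŷ_G(p))` as rational functions (stated pointwise wherever the
denominators do not vanish). -/
theorem substAll_rel_split_yVirt (H G : TTGraph)
    (hG : (G.toMultigraph.graphOf (Finset.univ : Finset G.toMultigraph.E)).Connected)
    (o : H.toMultigraph.E → H.V × H.V)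
    (ho : ∀ e, H.ends e = s((o e).1, (o e).2))
    (p : ℂ) (hS : G.split p ≠ 0) (hy : G.yVirt p ≠ 0) :
    (H.substAll G o).rel p
        = (G.rel p + G.split p) ^ (Fintype.card H.toMultigraph.E) * H.rel (G.yVirt p)⁻¹ ∧
    (H.substAll G o).split p
        = (G.rel p + G.split p) ^ (Fintype.card H.toMultigraph.E) * H.split (G.yVirt p)⁻¹ ∧
    ((H.substAll G o).split p ≠ 0 →
      (H.substAll G o).yVirt p = H.yVirt (G.yVirt p)⁻¹) := by
  classical
  set R := G.rel p with hRdef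
  set S := G.split p with hSdef
  set m := Fintype.card H.toMultigraph.E with hm
  set q := (G.yVirt p)⁻¹ with hqdef
  have hyv : G.yVirt p = (R + S) / S := by
    rw [TTGraph.yVirt, div_add' _ _ _ hS]
    ring_nf
    rw [← hRdef]; ring
  have hRS : R + S ≠ 0 := by
    intro h
    exact hy (by rw [hyv, h, zero_div])
  have hq : q = S / (R + S) := by rw [hqdef, hyv, inv_div]
  have h1q : 1 - q = R / (R + S) := by
    rw [hq, eq_div_iff hRS, sub_mul, div_mul_cancel₀ _ hRS, one_mul, add_sub_cancel_right]
  have hcard : Fintype.card (H.substAll G o).toMultigraph.E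
      = m * Fintype.card G.toMultigraph.E :=
    (Fintype.card_congr (Equiv.refl _)).trans (Fintype.card_prod _ _)
  have hpow : ∀ b, b ≤ m → R ^ b * S ^ (m - b) = (R + S) ^ m * ((1 - q) ^ b * q ^ (m - b)) := by
    intro b hb
    rw [h1q, hq, div_pow, div_pow,
      show (R + S) ^ m = (R + S) ^ b * (R + S) ^ (m - b) by
        rw [← pow_add, Nat.add_sub_cancel' hb]]
    have h1 : (R + S) ^ b ≠ 0 := pow_ne_zero _ hRS
    have h2 : (R + S) ^ (m - b) ≠ 0 := pow_ne_zero _ hRS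
    field_simp
    try ring
  have trans : ∀ Q : Finset H.toMultigraph.E → Prop,
      (∑ B : Finset H.toMultigraph.E, if Q B then R ^ B.card * S ^ (m - B.card) else 0)
        = (R + S) ^ m *
            ∑ B : Finset H.toMultigraph.E,
              if Q B then (1 - q) ^ B.card * q ^ (m - B.card) else 0 := by
    intro Q
    rw [Finset.mul_sum]
    refine Finset.sum_congr rfl fun B _ => ?_
    rw [mul_ite, mul_zero]
    exact if_congr Iff.rfl (hpow B.card (Finset.card_le_univ B)) rfl
  have part1 : (H.substAll G o).rel p = (R + S) ^ m * H.rel q := by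
    have hrelHG : (H.substAll G o).rel p
        = ∑ A : Finset (H.toMultigraph.E × G.toMultigraph.E),
            if ((H.substAll G o).toMultigraph.graphOf A).Connected then
              (1 - p) ^ A.card
                * p ^ (m * Fintype.card G.toMultigraph.E - A.card) else 0 := by
      rw [TTGraph.rel, Multigraph.rel, hcard]
      rfl
    rw [hrelHG,
      SubstAux.sum_key H G p (fun B => (H.toMultigraph.graphOf B).Connected)
        (fun A => ((H.substAll G o).toMultigraph.graphOf A).Connected)
        (fun f => SubstAux.conn_iff H G o f ho),
      trans]
    rfl
  have part2 : (H.substAll G o).split p = (R + S) ^ m * H.split q := by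
    have hsplitHG : (H.substAll G o).split p
        = ∑ A : Finset (H.toMultigraph.E × G.toMultigraph.E),
            if (H.substAll G o).IsSplit A then
              (1 - p) ^ A.card
                * p ^ (m * Fintype.card G.toMultigraph.E - A.card) else 0 := by
      rw [TTGraph.split, hcard]
      rfl
    rw [hsplitHG,
      SubstAux.sum_key H G p (fun B => H.IsSplit B)
        (fun A => (H.substAll G o).IsSplit A)
        (fun f => SubstAux.split_iff H G o f ho),
      trans]
    rfl
  refine ⟨part1, part2, fun hS' => ?_⟩
  rw [part2] at hS'
  have hc1 : ((R + S) ^ m : ℂ) ≠ 0 := left_ne_zero_of_mul hS'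
  rw [TTGraph.yVirt, TTGraph.yVirt, part1, part2, mul_div_mul_left _ _ hc1]
end
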